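/- Let E and H be real Hilbert spaces, Λ ⊆ H a nonempty compact convex set, and F : E × H → ℝ a differentiable function whose gradient is L-Lipschitz (L > 0). Assume that for each w ∈ E the map λ ↦ F(w, λ) is μ-strongly concave on Λ (μ > 0), let λ*(w) denote the unique maximizer of F(w, ·) over Λ, set Φ(w) := max_{λ ∈ Λ} F(w, λ) and κ := L/μ. Then Φ is differentiable with ∇Φ(w) = ∇_w F(w, λ*(w)) for every w ∈ E, and the map w ↦ ∇Φ(w) is (L + κL)-Lipschitz; that is, Φ is α-smooth with α = L + κL. -/

import Mathlib

/-- The pair `(w, l)` viewed as an element of the product Hilbert space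
`E × H` equipped with the `ℓ²` (Euclidean) product norm
`‖(w, λ)‖ = √(‖w‖² + ‖λ‖²)`. -/
noncomputable def pairL2 {E H : Type*} (w : E) (l : H) : WithLp 2 (E × H) :=
  (WithLp.equiv 2 (E × H)).symm (w, l)

section Aux

local notation "⟪" x ", " y "⟫" => @inner ℝ _ _ x y

variable {E H : Type*} [NormedAddCommGroup E] [InnerProductSpace ℝ E] [CompleteSpace E]
  [NormedAddCommGroup H] [InnerProductSpace ℝ H] [CompleteSpace H]

lemma pairL2_fst (w : E) (l : H) : (pairL2 w l).fst = w := rfl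
lemma pairL2_snd (w : E) (l : H) : (pairL2 w l).snd = l := rfl

lemma pairL2_sub (w₁ w₂ : E) (l₁ l₂ : H) :
    pairL2 w₁ l₁ - pairL2 w₂ l₂ = pairL2 (w₁ - w₂) (l₁ - l₂) := rfl

lemma pairL2_add (w₁ w₂ : E) (l₁ l₂ : H) :
    pairL2 w₁ l₁ + pairL2 w₂ l₂ = pairL2 (w₁ + w₂) (l₁ + l₂) := by
  unfold pairL2
  rfl

lemma norm_pairL2 (w : E) (l : H) : ‖pairL2 w l‖ = Real.sqrt (‖w‖ ^ 2 + ‖l‖ ^ 2) :=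
  WithLp.prod_norm_eq_of_L2 _

lemma norm_pairL2_left (w : E) : ‖pairL2 w (0 : H)‖ = ‖w‖ := by
  rw [norm_pairL2]; simp [Real.sqrt_sq (norm_nonneg w)]

lemma norm_pairL2_right (l : H) : ‖pairL2 (0 : E) l‖ = ‖l‖ := by
  rw [norm_pairL2]; simp [Real.sqrt_sq (norm_nonneg l)]

lemma inner_pairL2 (p : WithLp 2 (E × H)) (w : E) (l : H) :
    ⟪p, pairL2 w l⟫ = ⟪p.fst, w⟫ + ⟪p.snd, l⟫ := rfl

lemma norm_fst_le_L2 (x : WithLp 2 (E × H)) : ‖x.fst‖ ≤ ‖x‖ := by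
  have h := WithLp.prod_norm_sq_eq_of_L2 x
  nlinarith [norm_nonneg x.fst, norm_nonneg x.snd, norm_nonneg x]

lemma norm_snd_le_L2 (x : WithLp 2 (E × H)) : ‖x.snd‖ ≤ ‖x‖ := by
  have h := WithLp.prod_norm_sq_eq_of_L2 x
  nlinarith [norm_nonneg x.fst, norm_nonneg x.snd, norm_nonneg x]

lemma norm_sub_fst_le_L2 (x y : WithLp 2 (E × H)) : ‖x.fst - y.fst‖ ≤ ‖x - y‖ :=
  norm_fst_le_L2 (x - y)

lemma norm_sub_snd_le_L2 (x y : WithLp 2 (E × H)) : ‖x.snd - y.snd‖ ≤ ‖x - y‖ :=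
  norm_snd_le_L2 (x - y)

/-- The continuous linear map `w ↦ (w, 0)` into the `ℓ²` product. -/
noncomputable def inlL2 : E →L[ℝ] WithLp 2 (E × H) :=
  ((WithLp.prodContinuousLinearEquiv 2 ℝ E H).symm : E × H →L[ℝ] WithLp 2 (E × H)).comp
    (ContinuousLinearMap.inl ℝ E H)

/-- The continuous linear map `l ↦ (0, l)` into the `ℓ²` product. -/
noncomputable def inrL2 : H →L[ℝ] WithLp 2 (E × H) :=
  ((WithLp.prodContinuousLinearEquiv 2 ℝ E H).symm : E × H →L[ℝ] WithLp 2 (E × H)).comp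
    (ContinuousLinearMap.inr ℝ E H)

lemma inlL2_apply (w : E) : (inlL2 w : WithLp 2 (E × H)) = pairL2 w 0 := rfl
lemma inrL2_apply (l : H) : (inrL2 l : WithLp 2 (E × H)) = pairL2 0 l := rfl

/-- Gradient of the partial map in the first variable. -/
lemma hasGradientAt_partial_fst (F : WithLp 2 (E × H) → ℝ) (hF : Differentiable ℝ F)
    (w : E) (l : H) :
    HasGradientAt (fun w' => F (pairL2 w' l)) (gradient F (pairL2 w l)).fst w := by
  have h1 : HasFDerivAt F (InnerProductSpace.toDual ℝ _ (gradient F (pairL2 w l)))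
      (pairL2 w l) := (hF (pairL2 w l)).hasGradientAt.hasFDerivAt
  have h2 : HasFDerivAt (fun w' : E => pairL2 w' l) (inlL2 (H := H)) w := by
    have heq : (fun w' : E => pairL2 w' l) = fun w' => inlL2 w' + pairL2 (0 : E) l := by
      funext w'
      rw [inlL2_apply]
      show pairL2 w' l = pairL2 (w' + 0) (0 + l)
      rw [add_zero, zero_add]
    rw [heq]
    exact (inlL2 (E := E) (H := H)).hasFDerivAt.add_const _
  have h3 := h1.comp w h2
  rw [hasGradientAt_iff_hasFDerivAt]
  have heq : (InnerProductSpace.toDual ℝ E) ((gradient F (pairL2 w l)).fst)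
      = ((InnerProductSpace.toDual ℝ _ (gradient F (pairL2 w l))).comp (inlL2 (H := H))) := by
    ext x
    rw [ContinuousLinearMap.comp_apply, InnerProductSpace.toDual_apply_apply,
      InnerProductSpace.toDual_apply_apply, inlL2_apply, inner_pairL2]
    simp
  rw [heq]
  exact h3

/-- Gradient of the partial map in the second variable. -/
lemma hasGradientAt_partial_snd (F : WithLp 2 (E × H) → ℝ) (hF : Differentiable ℝ F)
    (w : E) (l : H) :
    HasGradientAt (fun l' => F (pairL2 w l')) (gradient F (pairL2 w l)).snd l := by
  have h1 : HasFDerivAt F (InnerProductSpace.toDual ℝ _ (gradient F (pairL2 w l)))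
      (pairL2 w l) := (hF (pairL2 w l)).hasGradientAt.hasFDerivAt
  have h2 : HasFDerivAt (fun l' : H => pairL2 w l') (inrL2 (E := E)) l := by
    have heq : (fun l' : H => pairL2 w l') = fun l' => inrL2 l' + pairL2 w (0 : H) := by
      funext l'
      rw [inrL2_apply]
      show pairL2 w l' = pairL2 (0 + w) (l' + 0)
      rw [zero_add, add_zero]
    rw [heq]
    exact (inrL2 (E := E) (H := H)).hasFDerivAt.add_const _
  have h3 := h1.comp l h2
  rw [hasGradientAt_iff_hasFDerivAt]
  have heq : (InnerProductSpace.toDual ℝ H) ((gradient F (pairL2 w l)).snd)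
      = ((InnerProductSpace.toDual ℝ _ (gradient F (pairL2 w l))).comp (inrL2 (E := E))) := by
    ext x
    rw [ContinuousLinearMap.comp_apply, InnerProductSpace.toDual_apply_apply,
      InnerProductSpace.toDual_apply_apply, inrL2_apply, inner_pairL2]
    simp
  rw [heq]
  exact h3

/-- Quadratic Taylor bound for a function with Lipschitz gradient. -/
lemma taylor_bound {G : Type*} [NormedAddCommGroup G] [InnerProductSpace ℝ G] [CompleteSpace G]
    (F : G → ℝ) (L : ℝ) (hL : 0 ≤ L) (hF : Differentiable ℝ F)
    (hFlip : ∀ p q : G, ‖gradient F p - gradient F q‖ ≤ L * ‖p - q‖) (p q : G) :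
    |F q - F p - ⟪gradient F p, q - p⟫| ≤ L * ‖q - p‖ ^ 2 := by
  set gp := gradient F p with hgp
  have hG : ∀ x : G, HasFDerivAt (fun y => F y - ⟪gp, y⟫)
      (InnerProductSpace.toDual ℝ G (gradient F x - gp)) x := by
    intro x
    have h1 := (hF x).hasGradientAt.hasFDerivAt
    have h2 : HasFDerivAt (fun y : G => ⟪gp, y⟫) (InnerProductSpace.toDual ℝ G gp) x :=
      (InnerProductSpace.toDual ℝ G gp).hasFDerivAt
    have h3 := h1.sub h2
    rwa [← map_sub] at h3
  have key := Convex.norm_image_sub_le_of_norm_hasFDerivWithin_le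
    (f := fun y => F y - ⟪gp, y⟫)
    (f' := fun x => InnerProductSpace.toDual ℝ G (gradient F x - gp))
    (s := Metric.closedBall p ‖q - p‖) (C := L * ‖q - p‖)
    (fun x _ => (hG x).hasFDerivWithinAt)
    (fun x hx => by
      rw [LinearIsometryEquiv.norm_map]
      calc ‖gradient F x - gp‖ ≤ L * ‖x - p‖ := hFlip x p
        _ ≤ L * ‖q - p‖ := by
            have : ‖x - p‖ ≤ ‖q - p‖ := by
              rw [← dist_eq_norm]; exact Metric.mem_closedBall.mp hx
            exact mul_le_mul_of_nonneg_left this hL)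
    (convex_closedBall p ‖q - p‖)
    (Metric.mem_closedBall_self (norm_nonneg _))
    (by rw [Metric.mem_closedBall, dist_eq_norm])
  have hrw : F q - ⟪gp, q⟫ - (F p - ⟪gp, p⟫) = F q - F p - ⟪gp, q - p⟫ := by
    rw [inner_sub_right]; ring
  rw [hrw] at key
  calc |F q - F p - ⟪gp, q - p⟫| ≤ L * ‖q - p‖ * ‖q - p‖ := key
    _ = L * ‖q - p‖ ^ 2 := by ring

end Aux

set_option maxHeartbeats 2000000 in
theorem phi_smooth_danskin
    {E H : Type*} [NormedAddCommGroup E] [InnerProductSpace ℝ E] [CompleteSpace E]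
    [NormedAddCommGroup H] [InnerProductSpace ℝ H] [CompleteSpace H]
    (Λ : Set H) (hΛne : Λ.Nonempty) (hΛcomp : IsCompact Λ) (hΛconv : Convex ℝ Λ)
    (F : WithLp 2 (E × H) → ℝ) (L μ : ℝ) (hL : 0 < L) (hμ : 0 < μ)
    (κ : ℝ) (hκ : κ = L / μ)
    (hFdiff : Differentiable ℝ F)
    (hFlip : ∀ p q : WithLp 2 (E × H), ‖gradient F p - gradient F q‖ ≤ L * ‖p - q‖)
    (hconc : ∀ w : E, ∀ x ∈ Λ, ∀ y ∈ Λ, ∀ a : ℝ, 0 ≤ a → a ≤ 1 →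
      a * F (pairL2 w x) + (1 - a) * F (pairL2 w y)
          + μ / 2 * a * (1 - a) * ‖x - y‖ ^ 2
        ≤ F (pairL2 w (a • x + (1 - a) • y)))
    (lam : E → H) (hlam_mem : ∀ w : E, lam w ∈ Λ)
    (hlam_max : ∀ w : E, ∀ l ∈ Λ, F (pairL2 w l) ≤ F (pairL2 w (lam w)))
    (hlam_uniq : ∀ w : E, ∀ l ∈ Λ,
      (∀ l' ∈ Λ, F (pairL2 w l') ≤ F (pairL2 w l)) → l = lam w)
    (Φ : E → ℝ) (hΦ : ∀ w : E, Φ w = F (pairL2 w (lam w))) :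
    (∀ w : E, HasGradientAt Φ (gradient (fun w' => F (pairL2 w' (lam w))) w) w) ∧
    (∀ w₁ w₂ : E,
      ‖gradient (fun w' => F (pairL2 w' (lam w₁))) w₁
          - gradient (fun w' => F (pairL2 w' (lam w₂))) w₂‖
        ≤ (L + κ * L) * ‖w₁ - w₂‖) := by
  have hκpos : 0 ≤ κ := by rw [hκ]; positivity
  -- the candidate gradient
  set g : E → E := fun w => (gradient F (pairL2 w (lam w))).fst with hg
  -- the partial gradient equals g
  have hgrad_eq : ∀ w₀ w : E,
      gradient (fun w' => F (pairL2 w' (lam w₀))) w = (gradient F (pairL2 w (lam w₀))).fst :=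
    fun w₀ w => (hasGradientAt_partial_fst F hFdiff w (lam w₀)).gradient
  -- quadratic growth at the maximizer
  have hquad : ∀ w : E, ∀ l ∈ Λ,
      F (pairL2 w l) + μ / 2 * ‖l - lam w‖ ^ 2 ≤ F (pairL2 w (lam w)) := by
    intro w l hl
    have key : ∀ a : ℝ, 0 < a → a ≤ 1 →
        F (pairL2 w l) + μ / 2 * (1 - a) * ‖l - lam w‖ ^ 2 ≤ F (pairL2 w (lam w)) := by
      intro a ha0 ha1
      have hmem : a • l + (1 - a) • lam w ∈ Λ :=
        hΛconv hl (hlam_mem w) (le_of_lt ha0) (by linarith) (by ring)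
      have h1 := hconc w l hl (lam w) (hlam_mem w) a (le_of_lt ha0) ha1
      have h2 := hlam_max w _ hmem
      nlinarith [sq_nonneg ‖l - lam w‖]
    have htend : Filter.Tendsto
        (fun a : ℝ => F (pairL2 w l) + μ / 2 * (1 - a) * ‖l - lam w‖ ^ 2)
        (nhdsWithin 0 (Set.Ioi 0)) (nhds (F (pairL2 w l) + μ / 2 * ‖l - lam w‖ ^ 2)) := by
      have h1a : Filter.Tendsto (fun a : ℝ => (1 : ℝ) - a) (nhds 0) (nhds (1 - 0)) :=
        (continuous_const.sub continuous_id).tendsto 0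
      have h2a : Filter.Tendsto
          (fun a : ℝ => F (pairL2 w l) + μ / 2 * (1 - a) * ‖l - lam w‖ ^ 2)
          (nhds 0) (nhds (F (pairL2 w l) + μ / 2 * (1 - 0) * ‖l - lam w‖ ^ 2)) :=
        Filter.Tendsto.const_add _ (((tendsto_const_nhds.mul h1a)).mul tendsto_const_nhds)
      simpa using h2a.mono_left nhdsWithin_le_nhds
    refine le_of_tendsto htend ?_
    filter_upwards [Ioc_mem_nhdsGT_of_mem (Set.left_mem_Ico.mpr one_pos)] with a ha
    exact key a ha.1 ha.2
  -- Lipschitz continuity of the argmax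
  have hlam_lip : ∀ w₁ w₂ : E, ‖lam w₁ - lam w₂‖ ≤ κ * ‖w₁ - w₂‖ := by
    intro w₁ w₂
    set l₁ := lam w₁
    set l₂ := lam w₂
    have h1 := hquad w₁ l₂ (hlam_mem w₂)
    have h2 := hquad w₂ l₁ (hlam_mem w₁)
    -- h : the difference function
    have hdiff : ∀ l : H, HasFDerivAt (fun l' => F (pairL2 w₁ l') - F (pairL2 w₂ l'))
        (InnerProductSpace.toDual ℝ H
          ((gradient F (pairL2 w₁ l)).snd - (gradient F (pairL2 w₂ l)).snd)) l := by
      intro l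
      have ha := (hasGradientAt_partial_snd F hFdiff w₁ l).hasFDerivAt
      have hb := (hasGradientAt_partial_snd F hFdiff w₂ l).hasFDerivAt
      have hc := ha.sub hb
      rwa [← map_sub] at hc
    have hmvt := Convex.norm_image_sub_le_of_norm_hasFDerivWithin_le
      (f := fun l' => F (pairL2 w₁ l') - F (pairL2 w₂ l'))
      (f' := fun l => InnerProductSpace.toDual ℝ H
        ((gradient F (pairL2 w₁ l)).snd - (gradient F (pairL2 w₂ l)).snd))
      (s := (Set.univ : Set H)) (C := L * ‖w₁ - w₂‖)
      (fun x _ => (hdiff x).hasFDerivWithinAt)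
      (fun x _ => by
        rw [LinearIsometryEquiv.norm_map]
        have hle : ‖(gradient F (pairL2 w₁ x)).snd - (gradient F (pairL2 w₂ x)).snd‖
            ≤ ‖gradient F (pairL2 w₁ x) - gradient F (pairL2 w₂ x)‖ :=
          norm_sub_snd_le_L2 _ _
        calc ‖(gradient F (pairL2 w₁ x)).snd - (gradient F (pairL2 w₂ x)).snd‖
            ≤ ‖gradient F (pairL2 w₁ x) - gradient F (pairL2 w₂ x)‖ := hle
          _ ≤ L * ‖pairL2 w₁ x - pairL2 w₂ x‖ := hFlip _ _
          _ = L * ‖w₁ - w₂‖ := by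
              rw [pairL2_sub, sub_self, norm_pairL2_left])
      convex_univ (Set.mem_univ l₂) (Set.mem_univ l₁)
    -- hmvt : ‖(F(w₁,l₁) - F(w₂,l₁)) - (F(w₁,l₂) - F(w₂,l₂))‖ ≤ L‖w₁-w₂‖ * ‖l₁ - l₂‖
    have habs : (F (pairL2 w₁ l₁) - F (pairL2 w₂ l₁)) - (F (pairL2 w₁ l₂) - F (pairL2 w₂ l₂))
        ≤ L * ‖w₁ - w₂‖ * ‖l₁ - l₂‖ := le_trans (le_abs_self _) hmvt
    have hnorm_symm : ‖l₂ - l₁‖ = ‖l₁ - l₂‖ := norm_sub_rev _ _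
    rw [hnorm_symm] at h1
    by_cases hzero : ‖l₁ - l₂‖ = 0
    · rw [hzero]; positivity
    · have hpos : 0 < ‖l₁ - l₂‖ := lt_of_le_of_ne (norm_nonneg _) (Ne.symm hzero)
      have hkey : μ * ‖l₁ - l₂‖ ^ 2 ≤ L * ‖w₁ - w₂‖ * ‖l₁ - l₂‖ := by nlinarith [h1, h2, habs]
      have h3 : μ * ‖l₁ - l₂‖ ≤ L * ‖w₁ - w₂‖ := by nlinarith [hkey, hpos]
      rw [hκ, div_mul_eq_mul_div, le_div_iff₀ hμ]
      nlinarith [h3]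
  -- quadratic error bound for Φ
  have herr : ∀ w w' : E,
      |Φ w' - Φ w - (inner ℝ (g w) (w' - w) : ℝ)| ≤ (2 * L + L * κ) * ‖w' - w‖ ^ 2 := by
    intro w w'
    set lw := lam w with hlw
    set lw' := lam w' with hlw'
    set p := pairL2 w lw with hp
    set q := pairL2 w lw' with hq2
    have hT1 := taylor_bound F L (le_of_lt hL) hFdiff hFlip p (pairL2 w' lw)
    have hT2 := taylor_bound F L (le_of_lt hL) hFdiff hFlip q (pairL2 w' lw')
    have hsub1 : pairL2 w' lw - p = pairL2 (w' - w) 0 := by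
      rw [hp, pairL2_sub, sub_self]
    have hsub2 : pairL2 w' lw' - q = pairL2 (w' - w) 0 := by
      rw [hq2, pairL2_sub, sub_self]
    have hn1 : ‖pairL2 w' lw - p‖ = ‖w' - w‖ := by rw [hsub1, norm_pairL2_left]
    have hn2 : ‖pairL2 w' lw' - q‖ = ‖w' - w‖ := by rw [hsub2, norm_pairL2_left]
    have hip1 : (inner ℝ (gradient F p) (pairL2 w' lw - p) : ℝ) = inner ℝ (g w) (w' - w) := by
      rw [hsub1, inner_pairL2]
      simp [hg]
      rfl
    have hip2 : (inner ℝ (gradient F q) (pairL2 w' lw' - q) : ℝ)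
        = inner ℝ ((gradient F q).fst) (w' - w) := by
      rw [hsub2, inner_pairL2]
      simp
    -- lower bound
    have hlow : Φ w' - Φ w - (inner ℝ (g w) (w' - w) : ℝ) ≥ -(L * ‖w' - w‖ ^ 2) := by
      have h1 : F (pairL2 w' lw) ≤ Φ w' := by rw [hΦ w']; exact hlam_max w' lw (hlam_mem w)
      have h2 : Φ w = F p := hΦ w
      have := abs_le.mp hT1
      rw [hip1, hn1] at this
      have hlow' := this.1
      linarith [hlow']
    -- upper bound
    have hup : Φ w' - Φ w - (inner ℝ (g w) (w' - w) : ℝ) ≤ (L + L * κ) * ‖w' - w‖ ^ 2 := by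
      have h1 : Φ w' = F (pairL2 w' lw') := hΦ w'
      have h2 : F q ≤ Φ w := by rw [hΦ w]; exact hlam_max w lw' (hlam_mem w')
      have hT2' := (abs_le.mp hT2).2
      rw [hip2, hn2] at hT2'
      -- inner difference bound
      have hid : (inner ℝ ((gradient F q).fst - g w) (w' - w) : ℝ)
          ≤ L * κ * ‖w' - w‖ ^ 2 := by
        have hc : (inner ℝ ((gradient F q).fst - g w) (w' - w) : ℝ)
            ≤ ‖(gradient F q).fst - g w‖ * ‖w' - w‖ := real_inner_le_norm _ _
        have hfst : ‖(gradient F q).fst - g w‖ ≤ ‖gradient F q - gradient F p‖ :=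
          norm_sub_fst_le_L2 _ _
        have hqp : ‖gradient F q - gradient F p‖ ≤ L * (κ * ‖w' - w‖) := by
          calc ‖gradient F q - gradient F p‖ ≤ L * ‖q - p‖ := hFlip q p
            _ = L * ‖lw' - lw‖ := by
                rw [hq2, hp, pairL2_sub, sub_self, norm_pairL2_right]
            _ ≤ L * (κ * ‖w' - w‖) := by
                apply mul_le_mul_of_nonneg_left _ (le_of_lt hL)
                have := hlam_lip w' w
                rwa [hlw, hlw']
        calc (inner ℝ ((gradient F q).fst - g w) (w' - w) : ℝ)
            ≤ ‖(gradient F q).fst - g w‖ * ‖w' - w‖ := hc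
          _ ≤ (L * (κ * ‖w' - w‖)) * ‖w' - w‖ :=
              mul_le_mul_of_nonneg_right (hfst.trans hqp) (norm_nonneg _)
          _ = L * κ * ‖w' - w‖ ^ 2 := by ring
      have hsplit : (inner ℝ ((gradient F q).fst) (w' - w) : ℝ)
          = inner ℝ (g w) (w' - w) + inner ℝ ((gradient F q).fst - g w) (w' - w) := by
        rw [← inner_add_left, add_sub_cancel]
      linarith [hid, hT2', h2, h1, hsplit]
    have e1 : 0 ≤ L * κ * ‖w' - w‖ ^ 2 :=
      mul_nonneg (mul_nonneg hL.le hκpos) (sq_nonneg _)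
    have e2 : 0 ≤ L * ‖w' - w‖ ^ 2 := mul_nonneg hL.le (sq_nonneg _)
    rw [abs_le]
    constructor
    · linarith [hlow, e1, e2]
    · linarith [hup, e1, e2]
  constructor
  · intro w
    rw [hgrad_eq w w]
    rw [hasGradientAt_iff_isLittleO]
    rw [Asymptotics.isLittleO_iff]
    intro c hc
    set C := 2 * L + L * κ with hC
    have hCpos : 0 < C := by positivity
    rw [Metric.eventually_nhds_iff]
    refine ⟨c / C, by positivity, fun {w'} hw' => ?_⟩
    have hd : ‖w' - w‖ < c / C := by rwa [← dist_eq_norm]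
    have h1 := herr w w'
    have h2 : C * ‖w' - w‖ ^ 2 ≤ c * ‖w' - w‖ := by
      have : C * ‖w' - w‖ ≤ c := by
        rw [← le_div_iff₀' hCpos]; exact le_of_lt hd
      nlinarith [norm_nonneg (w' - w)]
    show |Φ w' - Φ w - (inner ℝ (g w) (w' - w) : ℝ)| ≤ c * ‖w' - w‖
    exact h1.trans h2
  · intro w₁ w₂
    rw [hgrad_eq w₁ w₁, hgrad_eq w₂ w₂]
    set p₁ := pairL2 w₁ (lam w₁)
    set p₂ := pairL2 w₂ (lam w₂)
    have hfst : ‖(gradient F p₁).fst - (gradient F p₂).fst‖ ≤ ‖gradient F p₁ - gradient F p₂‖ :=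
      norm_sub_fst_le_L2 _ _
    have hsplit : p₁ - p₂ = pairL2 (w₁ - w₂) 0 + pairL2 0 (lam w₁ - lam w₂) := by
      rw [pairL2_sub, pairL2_add, add_zero, zero_add]
    have hnorm : ‖p₁ - p₂‖ ≤ ‖w₁ - w₂‖ + ‖lam w₁ - lam w₂‖ := by
      rw [hsplit]
      calc ‖pairL2 (w₁ - w₂) (0 : H) + pairL2 (0 : E) (lam w₁ - lam w₂)‖
          ≤ ‖pairL2 (w₁ - w₂) (0 : H)‖ + ‖pairL2 (0 : E) (lam w₁ - lam w₂)‖ := norm_add_le _ _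
        _ = ‖w₁ - w₂‖ + ‖lam w₁ - lam w₂‖ := by rw [norm_pairL2_left, norm_pairL2_right]
    calc ‖(gradient F p₁).fst - (gradient F p₂).fst‖
        ≤ ‖gradient F p₁ - gradient F p₂‖ := hfst
      _ ≤ L * ‖p₁ - p₂‖ := hFlip p₁ p₂
      _ ≤ L * (‖w₁ - w₂‖ + ‖lam w₁ - lam w₂‖) :=
          mul_le_mul_of_nonneg_left hnorm (le_of_lt hL)
      _ ≤ L * (‖w₁ - w₂‖ + κ * ‖w₁ - w₂‖) := by
          have := hlam_lip w₁ w₂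
          nlinarith
      _ = (L + κ * L) * ‖w₁ - w₂‖ := by ring
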